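/- Let {φ_x : x∈Ω} and {ψ_y : y∈Ω} be two mutually unbiased bases of a 2-dimensional complex Hilbert space H with |Ω| = 2, and let λ, μ ∈ ℝ with λ² + μ² = 1. Then the pair of uniformly noisy observables (A_λ, B_μ) belongs to CO(Ω) (i.e., A_λ and B_μ are compatible) but is not an extreme point of the convex set CO(Ω) of all compatible pairs of observables. -/

import Mathlib

open scoped InnerProductSpace

noncomputable section

/-- An observable with outcome set `Ω`: positive semidefinite operators summing to `1`. -/
def IsObservable {Ω H : Type*} [Fintype Ω] [NormedAddCommGroup H] [InnerProductSpace ℂ H]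
    [CompleteSpace H] (A : Ω → H →L[ℂ] H) : Prop :=
  (∀ x, (A x).IsPositive) ∧ (∑ x, A x) = 1

/-- `C` is a joint observable of `A` and `B`. -/
def IsJointObservable {Ω H : Type*} [Fintype Ω] [NormedAddCommGroup H] [InnerProductSpace ℂ H]
    [CompleteSpace H] (C : Ω × Ω → H →L[ℂ] H) (A B : Ω → H →L[ℂ] H) : Prop :=
  IsObservable C ∧ (∀ x, (∑ y, C (x, y)) = A x) ∧ (∀ y, (∑ x, C (x, y)) = B y)

/-- The set of all compatible pairs of observables. -/
def CO (Ω H : Type*) [Fintype Ω] [NormedAddCommGroup H] [InnerProductSpace ℂ H]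
    [CompleteSpace H] : Set ((Ω → H →L[ℂ] H) × (Ω → H →L[ℂ] H)) :=
  {AB | ∃ C, IsJointObservable C AB.1 AB.2}

/-- The rank-one operator `|φ⟩⟨φ|`. -/
def outer {H : Type*} [NormedAddCommGroup H] [InnerProductSpace ℂ H] (φ : H) : H →L[ℂ] H :=
  (innerSL ℂ φ).smulRight φ

section helpers

variable {H : Type*} [NormedAddCommGroup H] [InnerProductSpace ℂ H]

lemma outer_apply (φ v : H) : outer φ v = ⟪φ, v⟫_ℂ • φ := rfl

lemma key_ineq {S a b lam mu : ℝ} (hS : 0 ≤ S) (hab : a ^ 2 + b ^ 2 ≤ S ^ 2)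
    (hlm : lam ^ 2 + mu ^ 2 ≤ 1) : 0 ≤ S + lam * a + mu * b := by
  nlinarith [sq_nonneg (lam * b - mu * a), sq_nonneg (lam * a + mu * b),
    sq_nonneg (S + lam * a + mu * b), sq_nonneg a, sq_nonneg b]

lemma sum_of_univ_pair {Ω M : Type*} [Fintype Ω] [DecidableEq Ω] [AddCommMonoid M] {x₀ x₁ : Ω}
    (hne : x₀ ≠ x₁) (huniv : (Finset.univ : Finset Ω) = {x₀, x₁}) (f : Ω → M) :
    ∑ z, f z = f x₀ + f x₁ := by rw [huniv, Finset.sum_pair hne]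

variable [CompleteSpace H]

lemma isSelfAdjoint_combo (φ0 ψ0 : H) (r t u : ℝ) :
    IsSelfAdjoint (r • outer φ0 + t • outer ψ0 + u • (1 : H →L[ℂ] H)) := by
  rw [ContinuousLinearMap.isSelfAdjoint_iff_isSymmetric]
  intro a b
  simp only [ContinuousLinearMap.coe_coe, ContinuousLinearMap.add_apply,
    ContinuousLinearMap.smul_apply, ContinuousLinearMap.one_apply, outer_apply,
    inner_add_left, inner_add_right, RCLike.real_smul_eq_coe_smul (K := ℂ),
    inner_smul_left, inner_smul_right, RCLike.conj_ofReal, inner_conj_symm]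
  ring

set_option linter.unusedSectionVars false in
lemma re_inner_combo (φ0 ψ0 : H) (r t u : ℝ) (v : H) :
    RCLike.re ⟪(r • outer φ0 + t • outer ψ0 + u • (1 : H →L[ℂ] H)) v, v⟫_ℂ =
      r * ‖⟪φ0, v⟫_ℂ‖ ^ 2 + t * ‖⟪ψ0, v⟫_ℂ‖ ^ 2 + u * ‖v‖ ^ 2 := by
  simp only [ContinuousLinearMap.add_apply, ContinuousLinearMap.smul_apply,
    ContinuousLinearMap.one_apply, outer_apply, inner_add_left,
    RCLike.real_smul_eq_coe_smul (K := ℂ), inner_smul_left, RCLike.conj_ofReal, map_add]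
  simp only [RCLike.conj_mul, inner_self_eq_norm_sq_to_K, ← RCLike.ofReal_pow,
    ← RCLike.ofReal_mul, RCLike.ofReal_re]

lemma ContinuousLinearMap.IsPositive.real_smul {T : H →L[ℂ] H} (hT : T.IsPositive) {c : ℝ}
    (hc : 0 ≤ c) : (c • T).IsPositive := by
  have hs := hT.1
  constructor
  · intro a b
    simp only [ContinuousLinearMap.coe_coe, ContinuousLinearMap.smul_apply,
      RCLike.real_smul_eq_coe_smul (K := ℂ), inner_smul_left, inner_smul_right,
      RCLike.conj_ofReal]
    rw [show ⟪T a, b⟫_ℂ = ⟪a, T b⟫_ℂ from hs a b]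
  · intro x
    rw [ContinuousLinearMap.reApplyInnerSelf_apply, ContinuousLinearMap.smul_apply,
      RCLike.real_smul_eq_coe_smul (K := ℂ), inner_smul_left, RCLike.conj_ofReal,
      RCLike.re_ofReal_mul]
    exact mul_nonneg hc (hT.2 x)

end helpers

set_option maxHeartbeats 2000000 in
theorem qubit_boundary_not_extreme
    {H : Type*} [NormedAddCommGroup H] [InnerProductSpace ℂ H] [FiniteDimensional ℂ H]
    {Ω : Type*} [Fintype Ω] [DecidableEq Ω]
    (hcard : Fintype.card Ω = 2) (hdim : Module.finrank ℂ H = 2)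
    (φ ψ : OrthonormalBasis Ω ℂ H)
    (hMUB : ∀ x y : Ω, ‖⟪φ x, ψ y⟫_ℂ‖ = 1 / Real.sqrt 2)
    (lam mu : ℝ) (hcircle : lam ^ 2 + mu ^ 2 = 1) :
    ((fun x => lam • outer (φ x) + ((1 - lam) / 2) • (1 : H →L[ℂ] H)),
     (fun y => mu • outer (ψ y) + ((1 - mu) / 2) • (1 : H →L[ℂ] H))) ∈ CO Ω H ∧
    ((fun x => lam • outer (φ x) + ((1 - lam) / 2) • (1 : H →L[ℂ] H)),
     (fun y => mu • outer (ψ y) + ((1 - mu) / 2) • (1 : H →L[ℂ] H)))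
        ∉ Set.extremePoints ℝ (CO Ω H) := by
  classical
  -- two distinct points of Ω
  obtain ⟨x₀, x₁, hne, huniv⟩ : ∃ x₀ x₁ : Ω, x₀ ≠ x₁ ∧ (Finset.univ : Finset Ω) = {x₀, x₁} := by
    let e := Fintype.equivFinOfCardEq hcard
    have h01 : e.symm 0 ≠ e.symm 1 := e.symm.injective.ne (by decide)
    refine ⟨e.symm 0, e.symm 1, h01, ?_⟩
    refine (Finset.eq_of_subset_of_card_le (Finset.subset_univ _) ?_).symm
    rw [Finset.card_univ, hcard, Finset.card_insert_of_notMem (by simpa using h01),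
      Finset.card_singleton]
  have hne' : x₁ ≠ x₀ := hne.symm
  have hcases : ∀ z : Ω, z = x₀ ∨ z = x₁ := by
    intro z
    have hz := Finset.mem_univ z
    rw [huniv] at hz
    simpa using hz
  -- resolutions of the identity
  have hPres : outer (φ x₀) + outer (φ x₁) = (1 : H →L[ℂ] H) := by
    ext v
    have h := φ.sum_repr' v
    rw [sum_of_univ_pair hne huniv] at h
    simpa [outer_apply] using h
  have hQres : outer (ψ x₀) + outer (ψ x₁) = (1 : H →L[ℂ] H) := by
    ext v
    have h := ψ.sum_repr' v
    rw [sum_of_univ_pair hne huniv] at h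
    simpa [outer_apply] using h
  -- Parseval
  have hPar : ∀ (b : OrthonormalBasis Ω ℂ H) (v : H),
      ‖⟪b x₀, v⟫_ℂ‖ ^ 2 + ‖⟪b x₁, v⟫_ℂ‖ ^ 2 = ‖v‖ ^ 2 := by
    intro b v
    have h := b.sum_inner_mul_inner v v
    rw [sum_of_univ_pair hne huniv] at h
    have e1 : ∀ i : Ω, RCLike.re (⟪v, b i⟫_ℂ * ⟪b i, v⟫_ℂ) = ‖⟪b i, v⟫_ℂ‖ ^ 2 := by
      intro i
      rw [← inner_conj_symm v (b i), RCLike.conj_mul]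
      simp [← Complex.ofReal_pow]
    have h2 := congrArg RCLike.re h
    rw [map_add, e1 x₀, e1 x₁, inner_self_eq_norm_sq] at h2
    exact h2
  -- the key positivity inequality
  have key : ∀ lam' mu' : ℝ, lam' ^ 2 + mu' ^ 2 ≤ 1 → ∀ v : H,
      0 ≤ ‖v‖ ^ 2 + lam' * (‖⟪φ x₀, v⟫_ℂ‖ ^ 2 - ‖⟪φ x₁, v⟫_ℂ‖ ^ 2)
        + mu' * (‖⟪ψ x₀, v⟫_ℂ‖ ^ 2 - ‖⟪ψ x₁, v⟫_ℂ‖ ^ 2) := by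
    intro lam' mu' hlm v
    have hPa := hPar φ v
    have hPb := hPar ψ v
    have hv : (⟪φ x₀, v⟫_ℂ • φ x₀ + ⟪φ x₁, v⟫_ℂ • φ x₁ : H) = v := by
      have h := φ.sum_repr' v
      rwa [sum_of_univ_pair hne huniv] at h
    have hβ : ⟪ψ x₀, v⟫_ℂ = ⟪ψ x₀, φ x₀⟫_ℂ * ⟪φ x₀, v⟫_ℂ + ⟪ψ x₀, φ x₁⟫_ℂ * ⟪φ x₁, v⟫_ℂ := by
      conv_lhs => rw [← hv]
      simp [inner_add_right, inner_smul_right]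
      ring
    have habs : ∀ i j : Ω, ‖⟪ψ i, φ j⟫_ℂ‖ = 1 / Real.sqrt 2 := by
      intro i j
      rw [← inner_conj_symm (ψ i) (φ j), Complex.norm_conj]
      exact hMUB j i
    set α := ⟪φ x₀, v⟫_ℂ with hα
    set α' := ⟪φ x₁, v⟫_ℂ with hα'
    set β := ⟪ψ x₀, v⟫_ℂ with hβdef
    set β' := ⟪ψ x₁, v⟫_ℂ with hβ'def
    set c := ⟪ψ x₀, φ x₀⟫_ℂ with hcdef
    set c' := ⟪ψ x₀, φ x₁⟫_ℂ with hc'def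
    have sq2 : (1 / Real.sqrt 2) ^ 2 = 1 / 2 := by
      rw [div_pow, one_pow, Real.sq_sqrt] <;> norm_num
    have hc : ‖c‖ ^ 2 = 1 / 2 := by rw [hcdef, habs, sq2]
    have hc' : ‖c'‖ ^ 2 = 1 / 2 := by rw [hc'def, habs, sq2]
    have hnz : ∀ z : ℂ, Complex.normSq z = ‖z‖ ^ 2 := fun z => by
      rw [← Complex.sq_norm]
    have hq : ‖β‖ ^ 2 = ‖α‖ ^ 2 * (1 / 2) + ‖α'‖ ^ 2 * (1 / 2)
        + 2 * (c * α * (starRingEnd ℂ) (c' * α')).re := by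
      calc ‖β‖ ^ 2 = Complex.normSq (c * α + c' * α') := by rw [← hnz, hβ]
        _ = Complex.normSq c * Complex.normSq α + Complex.normSq c' * Complex.normSq α'
            + 2 * (c * α * (starRingEnd ℂ) (c' * α')).re := by
              rw [Complex.normSq_add, Complex.normSq_mul, Complex.normSq_mul]
        _ = _ := by rw [hnz, hnz, hnz, hnz, hc, hc']; ring
    set r := (c * α * (starRingEnd ℂ) (c' * α')).re with hrdef
    have habsr : |r| ≤ ‖α‖ * ‖α'‖ / 2 := by
      have h1 : |r| ≤ ‖c * α * (starRingEnd ℂ) (c' * α')‖ := Complex.abs_re_le_norm _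
      have h2 : ‖c * α * (starRingEnd ℂ) (c' * α')‖
          = 1 / Real.sqrt 2 * ‖α‖ * (1 / Real.sqrt 2 * ‖α'‖) := by
        rw [norm_mul, norm_mul, Complex.norm_conj, norm_mul, hcdef, hc'def, habs, habs]
      rw [h2] at h1
      have h3 : 1 / Real.sqrt 2 * ‖α‖ * (1 / Real.sqrt 2 * ‖α'‖)
          = (1 / Real.sqrt 2) ^ 2 * (‖α‖ * ‖α'‖) := by ring
      rw [h3, sq2] at h1
      linarith
    have hrb : r ^ 2 ≤ ‖α‖ ^ 2 * ‖α'‖ ^ 2 / 4 := by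
      nlinarith [sq_abs r, abs_nonneg r, habsr, norm_nonneg α, norm_nonneg α']
    have hS : 0 ≤ ‖v‖ ^ 2 := sq_nonneg _
    have hqq : ‖β‖ ^ 2 - ‖β'‖ ^ 2 = 4 * r := by linarith
    have hab : (‖α‖ ^ 2 - ‖α'‖ ^ 2) ^ 2 + (‖β‖ ^ 2 - ‖β'‖ ^ 2) ^ 2 ≤ (‖v‖ ^ 2) ^ 2 := by
      rw [hqq]
      calc (‖α‖ ^ 2 - ‖α'‖ ^ 2) ^ 2 + (4 * r) ^ 2
          ≤ (‖α‖ ^ 2 - ‖α'‖ ^ 2) ^ 2 + 4 * (‖α‖ ^ 2 * ‖α'‖ ^ 2) := by linarith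
        _ = (‖α‖ ^ 2 + ‖α'‖ ^ 2) ^ 2 := by ring
        _ = (‖v‖ ^ 2) ^ 2 := by rw [hPa]
    exact key_ineq hS hab hlm
  -- the joint observable
  set Cj : Ω × Ω → H →L[ℂ] H := fun z =>
    (lam / 2) • outer (φ z.1) + (mu / 2) • outer (ψ z.2) + ((1 - lam - mu) / 4) • 1 with hCj
  have hCpos : ∀ z : Ω × Ω, (Cj z).IsPositive := by
    rintro ⟨x, y⟩
    constructor
    · simpa [hCj] using ContinuousLinearMap.isSelfAdjoint_iff_isSymmetric.mp
        (isSelfAdjoint_combo (φ x) (ψ y) (lam / 2) (mu / 2) ((1 - lam - mu) / 4))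
    · intro v
      rw [ContinuousLinearMap.reApplyInnerSelf_apply]
      simp only [hCj]
      rw [re_inner_combo (φ x) (ψ y) (lam / 2) (mu / 2) ((1 - lam - mu) / 4) v]
      have hPa := hPar φ v
      have hPb := hPar ψ v
      have e1 : lam * (‖⟪φ x₀, v⟫_ℂ‖ ^ 2 + ‖⟪φ x₁, v⟫_ℂ‖ ^ 2) = lam * ‖v‖ ^ 2 := by rw [hPa]
      have e2 : mu * (‖⟪ψ x₀, v⟫_ℂ‖ ^ 2 + ‖⟪ψ x₁, v⟫_ℂ‖ ^ 2) = mu * ‖v‖ ^ 2 := by rw [hPb]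
      rcases hcases x with rfl | rfl <;> rcases hcases y with rfl | rfl
      · have hk := key lam mu hcircle.le v; linarith
      · have hk := key lam (-mu) (by rw [neg_sq]; exact hcircle.le) v; linarith
      · have hk := key (-lam) mu (by rw [neg_sq]; exact hcircle.le) v; linarith
      · have hk := key (-lam) (-mu) (by rw [neg_sq, neg_sq]; exact hcircle.le) v; linarith
  have hmargA : ∀ x, (∑ y, Cj (x, y))
      = lam • outer (φ x) + ((1 - lam) / 2) • (1 : H →L[ℂ] H) := by
    intro x
    rw [sum_of_univ_pair hne huniv (fun y => Cj (x, y))]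
    simp only [hCj]
    rw [← hQres]
    module
  have hmargB : ∀ y, (∑ x, Cj (x, y))
      = mu • outer (ψ y) + ((1 - mu) / 2) • (1 : H →L[ℂ] H) := by
    intro y
    rw [sum_of_univ_pair hne huniv (fun x => Cj (x, y))]
    simp only [hCj]
    rw [← hPres]
    module
  have hCsum : (∑ z : Ω × Ω, Cj z) = 1 := by
    calc ∑ z : Ω × Ω, Cj z = ∑ x, ∑ y, Cj (x, y) := Fintype.sum_prod_type _
      _ = ∑ x, (lam • outer (φ x) + ((1 - lam) / 2) • (1 : H →L[ℂ] H)) :=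
          Finset.sum_congr rfl fun x _ => hmargA x
      _ = (lam • outer (φ x₀) + ((1 - lam) / 2) • (1 : H →L[ℂ] H))
          + (lam • outer (φ x₁) + ((1 - lam) / 2) • (1 : H →L[ℂ] H)) :=
          sum_of_univ_pair hne huniv _
      _ = 1 := by rw [← hPres]; module
  -- the sign function and perturbations
  set s : Ω → ℝ := fun z => if z = x₀ then 1 else -1 with hsdef
  have hs0 : s x₀ = 1 := by simp [hsdef]
  have hs1 : s x₁ = -1 := by simp [hsdef, hne']
  set Ap : Ω → H →L[ℂ] H := fun x => (lam • outer (φ x) + ((1 - lam) / 2) • 1)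
    + (s x * (mu / 2)) • (outer (ψ x₀) - outer (ψ x₁)) with hAp
  set Am : Ω → H →L[ℂ] H := fun x => (lam • outer (φ x) + ((1 - lam) / 2) • 1)
    - (s x * (mu / 2)) • (outer (ψ x₀) - outer (ψ x₁)) with hAm
  set Bp : Ω → H →L[ℂ] H := fun y => (mu • outer (ψ y) + ((1 - mu) / 2) • 1)
    + (s y * (lam / 2)) • (outer (φ x₀) - outer (φ x₁)) with hBp
  set Bm : Ω → H →L[ℂ] H := fun y => (mu • outer (ψ y) + ((1 - mu) / 2) • 1)
    - (s y * (lam / 2)) • (outer (φ x₀) - outer (φ x₁)) with hBm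
  set CjP : Ω × Ω → H →L[ℂ] H := fun z => (1 + s z.1 * s z.2) • Cj z with hCjP
  set CjM : Ω × Ω → H →L[ℂ] H := fun z => (1 - s z.1 * s z.2) • Cj z with hCjM
  have hsval : ∀ w : Ω, s w = 1 ∨ s w = -1 := by
    intro w
    rcases hcases w with rfl | rfl
    · exact Or.inl hs0
    · exact Or.inr hs1
  have hCjPpos : ∀ z : Ω × Ω, (CjP z).IsPositive := by
    intro z
    rw [hCjP]
    refine (hCpos z).real_smul ?_
    rcases hsval z.1 with h1 | h1 <;> rcases hsval z.2 with h2 | h2 <;> rw [h1, h2] <;> norm_num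
  have hCjMpos : ∀ z : Ω × Ω, (CjM z).IsPositive := by
    intro z
    rw [hCjM]
    refine (hCpos z).real_smul ?_
    rcases hsval z.1 with h1 | h1 <;> rcases hsval z.2 with h2 | h2 <;> rw [h1, h2] <;> norm_num
  have hmargAP : ∀ x, (∑ y, CjP (x, y)) = Ap x := by
    intro x
    rw [sum_of_univ_pair hne huniv (fun y => CjP (x, y))]
    rcases hcases x with rfl | rfl <;>
      simp only [hCjP, hCj, hAp, hs0, hs1] <;> rw [← hQres] <;> module
  have hmargAM : ∀ x, (∑ y, CjM (x, y)) = Am x := by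
    intro x
    rw [sum_of_univ_pair hne huniv (fun y => CjM (x, y))]
    rcases hcases x with rfl | rfl <;>
      simp only [hCjM, hCj, hAm, hs0, hs1] <;> rw [← hQres] <;> module
  have hmargBP : ∀ y, (∑ x, CjP (x, y)) = Bp y := by
    intro y
    rw [sum_of_univ_pair hne huniv (fun x => CjP (x, y))]
    rcases hcases y with rfl | rfl <;>
      simp only [hCjP, hCj, hBp, hs0, hs1] <;> rw [← hPres] <;> module
  have hmargBM : ∀ y, (∑ x, CjM (x, y)) = Bm y := by
    intro y
    rw [sum_of_univ_pair hne huniv (fun x => CjM (x, y))]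
    rcases hcases y with rfl | rfl <;>
      simp only [hCjM, hCj, hBm, hs0, hs1] <;> rw [← hPres] <;> module
  have hCjPsum : (∑ z : Ω × Ω, CjP z) = 1 := by
    calc ∑ z : Ω × Ω, CjP z = ∑ x, ∑ y, CjP (x, y) := Fintype.sum_prod_type _
      _ = ∑ x, Ap x := Finset.sum_congr rfl fun x _ => hmargAP x
      _ = Ap x₀ + Ap x₁ := sum_of_univ_pair hne huniv _
      _ = 1 := by simp only [hAp, hs0, hs1]; rw [← hPres]; module
  have hCjMsum : (∑ z : Ω × Ω, CjM z) = 1 := by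
    calc ∑ z : Ω × Ω, CjM z = ∑ x, ∑ y, CjM (x, y) := Fintype.sum_prod_type _
      _ = ∑ x, Am x := Finset.sum_congr rfl fun x _ => hmargAM x
      _ = Am x₀ + Am x₁ := sum_of_univ_pair hne huniv _
      _ = 1 := by simp only [hAm, hs0, hs1]; rw [← hPres]; module
  have hmemP : (Ap, Bp) ∈ CO Ω H := ⟨CjP, ⟨⟨hCjPpos, hCjPsum⟩, hmargAP, hmargBP⟩⟩
  have hmemM : (Am, Bm) ∈ CO Ω H := ⟨CjM, ⟨⟨hCjMpos, hCjMsum⟩, hmargAM, hmargBM⟩⟩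
  refine ⟨⟨Cj, ⟨⟨hCpos, hCsum⟩, hmargA, hmargB⟩⟩, ?_⟩
  intro hext
  obtain ⟨-, hext2⟩ := hext
  have hmid : ((fun x => lam • outer (φ x) + ((1 - lam) / 2) • (1 : H →L[ℂ] H)),
      (fun y => mu • outer (ψ y) + ((1 - mu) / 2) • (1 : H →L[ℂ] H)))
      ∈ openSegment ℝ (Ap, Bp) (Am, Bm) := by
    refine ⟨1 / 2, 1 / 2, by norm_num, by norm_num, by norm_num, ?_⟩
    refine Prod.ext ?_ ?_
    · show (1 / 2 : ℝ) • Ap + (1 / 2 : ℝ) • Am = _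
      funext x
      simp only [Pi.add_apply, Pi.smul_apply, hAp, hAm]
      module
    · show (1 / 2 : ℝ) • Bp + (1 / 2 : ℝ) • Bm = _
      funext y
      simp only [Pi.add_apply, Pi.smul_apply, hBp, hBm]
      module
  have hPeq := hext2 hmemP hmemM hmid
  have hone : ∀ (b : OrthonormalBasis Ω ℂ H), (outer (b x₀) - outer (b x₁)) (b x₀) = b x₀ := by
    intro b
    have hii : ⟪b x₀, b x₀⟫_ℂ = 1 := by
      rw [orthonormal_iff_ite.mp b.orthonormal x₀ x₀, if_pos rfl]
    have hij : ⟪b x₁, b x₀⟫_ℂ = 0 := by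
      rw [orthonormal_iff_ite.mp b.orthonormal x₁ x₀, if_neg hne']
    simp [ContinuousLinearMap.sub_apply, outer_apply, hii, hij]
  have hb0 : ∀ (b : OrthonormalBasis Ω ℂ H), b x₀ ≠ 0 := by
    intro b hb
    have := b.orthonormal.1 x₀
    rw [hb] at this
    simp at this
  have hlmne : lam ≠ 0 ∨ mu ≠ 0 := by
    by_contra hcon
    push_neg at hcon
    rw [hcon.1, hcon.2] at hcircle
    norm_num at hcircle
  rcases hlmne with hlam | hmu
  · have h1 : Bp x₀ = mu • outer (ψ x₀) + ((1 - mu) / 2) • (1 : H →L[ℂ] H) :=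
      congrFun (congrArg Prod.snd hPeq) x₀
    rw [hBp] at h1
    simp only [hs0] at h1
    have h2 : (1 * (lam / 2)) • (outer (φ x₀) - outer (φ x₁)) = 0 := by
      have := add_eq_left.mp h1
      exact this
    have h3 := congrArg (fun T : H →L[ℂ] H => T (φ x₀)) h2
    simp only [ContinuousLinearMap.smul_apply, ContinuousLinearMap.zero_apply, hone φ] at h3
    rcases smul_eq_zero.mp h3 with h | h
    · rw [one_mul] at h
      exact hlam (by linarith [h])
    · exact hb0 φ h
  · have h1 : Ap x₀ = lam • outer (φ x₀) + ((1 - lam) / 2) • (1 : H →L[ℂ] H) :=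
      congrFun (congrArg Prod.fst hPeq) x₀
    rw [hAp] at h1
    simp only [hs0] at h1
    have h2 : (1 * (mu / 2)) • (outer (ψ x₀) - outer (ψ x₁)) = 0 := by
      have := add_eq_left.mp h1
      exact this
    have h3 := congrArg (fun T : H →L[ℂ] H => T (ψ x₀)) h2
    simp only [ContinuousLinearMap.smul_apply, ContinuousLinearMap.zero_apply, hone ψ] at h3
    rcases smul_eq_zero.mp h3 with h | h
    · rw [one_mul] at h
      exact hmu (by linarith [h])
    · exact hb0 ψ h
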